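/- For all A, B ∈ M_n(ℂ), |tr(A*B)|² ≤ tr(|A||B|) · tr(|A*||B*|), and consequently |tr(A*B)| ≤ (tr(|A||B|) + tr(|A*||B*|))/2. -/

import Mathlib

open Matrix
open scoped ComplexOrder

/-- The positive semidefinite square root, as `Matrix.PosSemidef.sqrt` was defined in the
older Mathlib (removed since). -/
noncomputable def psdSqrt {k : Type*} [Fintype k] [DecidableEq k]
    {M : Matrix k k ℂ} (hM : M.PosSemidef) : Matrix k k ℂ :=
  (hM.1.eigenvectorUnitary : Matrix k k ℂ) *
    diagonal ((↑) ∘ (√·) ∘ hM.1.eigenvalues) * (star (hM.1.eigenvectorUnitary : Matrix k k ℂ))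

lemma posSemidef_psdSqrt {k : Type*} [Fintype k] [DecidableEq k]
    {M : Matrix k k ℂ} (hM : M.PosSemidef) : (psdSqrt hM).PosSemidef := by
  unfold psdSqrt
  have hd : (diagonal ((↑) ∘ (√·) ∘ hM.1.eigenvalues : k → ℂ)).PosSemidef := by
    refine Matrix.PosSemidef.diagonal (fun i => ?_)
    simp [Complex.le_def, Real.sqrt_nonneg]
  simpa [star_eq_conjTranspose] using
    hd.mul_mul_conjTranspose_same (hM.1.eigenvectorUnitary : Matrix k k ℂ)

/-- The usual modulus `|Z| = (Zᴴ Z)^(1/2)` (positive semidefinite square root). -/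
noncomputable def mAbs {k : Type*} [Fintype k] [DecidableEq k]
    (Z : Matrix k k ℂ) : Matrix k k ℂ :=
  psdSqrt (Matrix.posSemidef_conjTranspose_mul_self Z)

lemma mAbs_posSemidef {k : Type*} [Fintype k] [DecidableEq k]
    (Z : Matrix k k ℂ) : (mAbs Z).PosSemidef :=
  posSemidef_psdSqrt _

lemma psd_half_smul {k : Type*} [Fintype k] [DecidableEq k]
    {M : Matrix k k ℂ} (h : M.PosSemidef) :
    ((2:ℂ)⁻¹ • M).PosSemidef := by
  constructor
  · unfold Matrix.IsHermitian
    rw [conjTranspose_smul, h.1]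
    norm_num
  · intro x
    exact (h.smul (a := (2:ℂ)⁻¹) (by simp [Complex.le_def])).2 x

/-- The arithmetic symmetric modulus `(|Z| + |Z*|)/2`. -/
noncomputable def symMod {k : Type*} [Fintype k] [DecidableEq k]
    (Z : Matrix k k ℂ) : Matrix k k ℂ :=
  (2:ℂ)⁻¹ • (mAbs Z + mAbs Zᴴ)

lemma symMod_posSemidef {k : Type*} [Fintype k] [DecidableEq k]
    (Z : Matrix k k ℂ) : (symMod Z).PosSemidef :=
  psd_half_smul ((mAbs_posSemidef Z).add (mAbs_posSemidef Zᴴ))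

lemma qsym_arg_psd {k : Type*} [Fintype k] [DecidableEq k]
    (Z : Matrix k k ℂ) :
    ((2:ℂ)⁻¹ • (mAbs Z ^ 2 + mAbs Zᴴ ^ 2)).PosSemidef :=
  psd_half_smul (((mAbs_posSemidef Z).pow 2).add ((mAbs_posSemidef Zᴴ).pow 2))

/-- The quadratic symmetric modulus `((|Z|² + |Z*|²)/2)^(1/2)`. -/
noncomputable def qsymMod {k : Type*} [Fintype k] [DecidableEq k]
    (Z : Matrix k k ℂ) : Matrix k k ℂ :=
  psdSqrt (qsym_arg_psd Z)

lemma qsymMod_posSemidef {k : Type*} [Fintype k] [DecidableEq k]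
    (Z : Matrix k k ℂ) : (qsymMod Z).PosSemidef :=
  posSemidef_psdSqrt _

/-- The Schatten `p`-norm, as the `ℓ^p` norm of the singular values
(the eigenvalues of `|X|`). -/
noncomputable def schatten {k : Type*} [Fintype k] [DecidableEq k]
    (p : ℝ) (X : Matrix k k ℂ) : ℝ :=
  (∑ i, ((mAbs_posSemidef X).1.eigenvalues i) ^ p) ^ (1/p)

/-- The operator norm: the largest singular value. -/
noncomputable def opN {k : Type*} [Fintype k] [DecidableEq k]
    (X : Matrix k k ℂ) : ℝ :=
  ⨆ i, (mAbs_posSemidef X).1.eigenvalues i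

/-- The Frobenius (Schatten-2) norm. -/
noncomputable def frob {k : Type*} [Fintype k] [DecidableEq k]
    (X : Matrix k k ℂ) : ℝ :=
  Real.sqrt ((Xᴴ * X).trace.re)

open scoped MatrixOrder in
lemma psdSqrt_eq_of_sq_eq {k : Type*} [Fintype k] [DecidableEq k]
    {P M : Matrix k k ℂ} (hP : P.PosSemidef) (hM : M.PosSemidef) (h : P ^ 2 = M) :
    P = psdSqrt hM := by
  have e : psdSqrt hM = CFC.sqrt M := by
    rw [CFC.sqrt_eq_cfc, cfc_nnreal_eq_real _ M, hM.1.cfc_eq]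
    unfold psdSqrt IsHermitian.cfc
    simp [Function.comp_def, Real.coe_toNNReal', star_eq_conjTranspose,
      max_eq_left (hM.eigenvalues_nonneg _)]
  rw [e, eq_comm, CFC.sqrt_eq_iff _ _ hM.nonneg hP.nonneg, ← sq, h]

lemma aux_key {k : Type*} [Fintype k] [DecidableEq k] (A : Matrix k k ℂ) :
    ∃ P E : Matrix k k ℂ, Pᴴ = P ∧ Eᴴ = E ∧ P * P = mAbs A ∧
      P * E * Aᴴ = Aᴴ ∧ A * (E * E) * Aᴴ = mAbs Aᴴ := by
  have hA := Matrix.posSemidef_conjTranspose_mul_self A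
  set U : Matrix k k ℂ := ↑(hA.1.eigenvectorUnitary) with hUdef
  set d : k → ℝ := hA.1.eigenvalues with hddef
  have hd : ∀ i, 0 ≤ d i := hA.eigenvalues_nonneg
  have hUU : Uᴴ * U = 1 := by
    simpa [star_eq_conjTranspose] using
      (Matrix.mem_unitaryGroup_iff').mp hA.1.eigenvectorUnitary.2
  have hUU' : U * Uᴴ = 1 := by
    simpa [star_eq_conjTranspose] using
      (Matrix.mem_unitaryGroup_iff).mp hA.1.eigenvectorUnitary.2
  have conjmul : ∀ f g : k → ℂ, (U * diagonal f * Uᴴ) * (U * diagonal g * Uᴴ)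
      = U * diagonal (fun i => f i * g i) * Uᴴ := by
    intro f g
    simp only [Matrix.mul_assoc]
    rw [← Matrix.mul_assoc Uᴴ U, hUU, one_mul, ← Matrix.mul_assoc (diagonal f),
      diagonal_mul_diagonal]
  set pc : k → ℂ := fun i => ((Real.sqrt (Real.sqrt (d i)) : ℝ) : ℂ) with hpc
  set qc : k → ℂ := fun i => if d i = 0 then 0 else (pc i)⁻¹ with hqc
  set s : k → ℂ := fun i => if d i = 0 then 0 else 1 with hs
  have hpc0 : ∀ i, d i ≠ 0 → pc i ≠ 0 := by
    intro i hi
    have h : 0 < Real.sqrt (Real.sqrt (d i)) :=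
      Real.sqrt_pos.mpr (Real.sqrt_pos.mpr (lt_of_le_of_ne (hd i) (Ne.symm hi)))
    show ((Real.sqrt (Real.sqrt (d i)) : ℝ) : ℂ) ≠ 0
    exact_mod_cast h.ne'
  have hpc4 : ∀ i, pc i * pc i * (pc i * pc i) = ((d i : ℝ) : ℂ) := by
    intro i
    have h : Real.sqrt (Real.sqrt (d i)) * Real.sqrt (Real.sqrt (d i)) *
        (Real.sqrt (Real.sqrt (d i)) * Real.sqrt (Real.sqrt (d i))) = d i := by
      rw [Real.mul_self_sqrt (Real.sqrt_nonneg _), Real.mul_self_sqrt (hd i)]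
    have h2 := congrArg Complex.ofReal h
    push_cast at h2
    exact h2
  have hstarp : (star pc : k → ℂ) = pc := by
    funext i
    simp [hpc, Pi.star_apply, Complex.star_def, Complex.conj_ofReal]
  have hstarq : (star qc : k → ℂ) = qc := by
    funext i
    by_cases hi : d i = 0 <;>
      simp [hqc, hpc, hi, Pi.star_apply, Complex.star_def, map_inv₀, Complex.conj_ofReal]
  have hstars : (star s : k → ℂ) = s := by
    funext i
    by_cases hi : d i = 0 <;> simp [hs, hi, Pi.star_apply]
  have hherm : ∀ f : k → ℂ, (star f : k → ℂ) = f →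
      (U * diagonal f * Uᴴ)ᴴ = U * diagonal f * Uᴴ := by
    intro f hf
    rw [conjTranspose_mul, conjTranspose_mul, conjTranspose_conjTranspose,
      diagonal_conjTranspose, hf, Matrix.mul_assoc]
  have hspec : Uᴴ * (Aᴴ * A) * U = diagonal (fun i => ((d i : ℝ) : ℂ)) := by
    have := hA.1.conjStarAlgAut_star_eigenvectorUnitary
    simpa [star_eq_conjTranspose, Function.comp_def, Unitary.conjStarAlgAut_apply, Matrix.mul_assoc] using this
  have hspec' : Aᴴ * A = U * diagonal (fun i => ((d i : ℝ) : ℂ)) * Uᴴ := by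
    have := hA.1.spectral_theorem
    simpa [star_eq_conjTranspose, Function.comp_def, Unitary.conjStarAlgAut_apply] using this
  set M : Matrix k k ℂ := Uᴴ * Aᴴ with hM
  have hMM : M * Mᴴ = diagonal (fun i => ((d i : ℝ) : ℂ)) := by
    rw [hM, conjTranspose_mul, conjTranspose_conjTranspose, conjTranspose_conjTranspose,
      ← hspec]
    simp only [Matrix.mul_assoc]
  have hrow : ∀ i, d i = 0 → ∀ j, M i j = 0 := by
    intro i hi j
    have h1 : (M * Mᴴ) i i = 0 := by rw [hMM]; simp [hi]
    rw [Matrix.mul_apply] at h1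
    have h2 : ∑ l, (Complex.normSq (M i l) : ℂ) = 0 := by
      rw [← h1]
      refine Finset.sum_congr rfl fun l _ => ?_
      rw [conjTranspose_apply, ← Complex.mul_conj]
      rfl
    have h3 : ∑ l, Complex.normSq (M i l) = 0 := by
      have := congrArg Complex.re h2
      simpa [Complex.re_sum] using this
    have h4 := (Finset.sum_eq_zero_iff_of_nonneg
      (fun l _ => Complex.normSq_nonneg (M i l))).mp h3 j (Finset.mem_univ j)
    exact Complex.normSq_eq_zero.mp h4
  have hprojM : diagonal s * M = M := by
    ext i j
    rw [diagonal_mul]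
    by_cases hi : d i = 0
    · rw [hrow i hi j, hs]; simp [hi]
    · rw [hs]; simp [hi]
  have hproj : (U * diagonal s * Uᴴ) * Aᴴ = Aᴴ := by
    calc (U * diagonal s * Uᴴ) * Aᴴ = U * (diagonal s * (Uᴴ * Aᴴ)) := by
          simp only [Matrix.mul_assoc]
      _ = U * (Uᴴ * Aᴴ) := by rw [← hM, hprojM, hM]
      _ = Aᴴ := by rw [← Matrix.mul_assoc, hUU', one_mul]
  have h2 : A * (U * diagonal s * Uᴴ) = A := by
    have h := congrArg conjTranspose hproj
    rw [conjTranspose_mul, hherm s hstars, conjTranspose_conjTranspose] at h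
    exact h
  refine ⟨U * diagonal pc * Uᴴ, U * diagonal qc * Uᴴ, hherm pc hstarp, hherm qc hstarq,
    ?_, ?_, ?_⟩
  · rw [conjmul]
    have hfun2 : (fun i => pc i * pc i)
        = ((RCLike.ofReal : ℝ → ℂ) ∘ Real.sqrt ∘ hA.1.eigenvalues) := by
      funext i
      show ((Real.sqrt (Real.sqrt (d i)) : ℝ) : ℂ) * ((Real.sqrt (Real.sqrt (d i)) : ℝ) : ℂ) = _
      rw [← Complex.ofReal_mul, Real.mul_self_sqrt (Real.sqrt_nonneg _)]
      rfl
    show _ = psdSqrt hA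
    rw [psdSqrt, hfun2]
    rfl
  · rw [conjmul]
    have hfun : (fun i => pc i * qc i) = s := by
      funext i
      by_cases hi : d i = 0
      · simp [hqc, hs, hi]
      · simp [hqc, hs, hi, mul_inv_cancel₀ (hpc0 i hi)]
    rw [hfun, hproj]
  · rw [conjmul]
    set EE : Matrix k k ℂ := U * diagonal (fun i => qc i * qc i) * Uᴴ with hEE
    have hmid : EE * (Aᴴ * A) * EE = U * diagonal s * Uᴴ := by
      rw [hEE, hspec', conjmul, conjmul]
      have hfun : (fun i => qc i * qc i * ((d i : ℝ) : ℂ) * (qc i * qc i)) = s := by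
        funext i
        by_cases hi : d i = 0
        · simp [hqc, hs, hi]
        · have h4 := hpc4 i
          have hp := hpc0 i hi
          simp only [hqc, hs, if_neg hi]
          field_simp
          linear_combination -h4
      rw [hfun]
    have hsq : (A * EE * Aᴴ) * (A * EE * Aᴴ) = (Aᴴ)ᴴ * Aᴴ := by
      have h1 : (A * EE * Aᴴ) * (A * EE * Aᴴ) = A * (EE * (Aᴴ * A) * EE) * Aᴴ := by
        simp only [Matrix.mul_assoc]
      rw [h1, hmid, conjTranspose_conjTranspose, h2]
    have hpsd : (A * EE * Aᴴ).PosSemidef := by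
      have hrepr : A * EE * Aᴴ = (A * (U * diagonal qc)) * (A * (U * diagonal qc))ᴴ := by
        rw [conjTranspose_mul, conjTranspose_mul, diagonal_conjTranspose, hstarq, hEE]
        simp only [Matrix.mul_assoc]
        rw [← Matrix.mul_assoc (diagonal qc) (diagonal qc), diagonal_mul_diagonal]
      rw [hrepr]
      exact Matrix.posSemidef_self_mul_conjTranspose _
    have hfin := psdSqrt_eq_of_sq_eq hpsd (Matrix.posSemidef_conjTranspose_mul_self Aᴴ)
      (by rw [pow_two]; exact hsq)
    exact hfin

lemma trace_eq_sum' {k : Type*} [Fintype k] (X Y : Matrix k k ℂ) :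
    (Xᴴ * Y).trace = ∑ p : k × k, (starRingEnd ℂ) (X p.2 p.1) * Y p.2 p.1 := by
  rw [Matrix.trace]
  simp only [Matrix.diag, Matrix.mul_apply, Matrix.conjTranspose_apply, star]
  rw [← Finset.sum_product']
  rfl

lemma trace_re_eq {k : Type*} [Fintype k] (Z : Matrix k k ℂ) :
    ((Zᴴ * Z).trace).re = ∑ p : k × k, ‖Z p.2 p.1‖ ^ 2 := by
  rw [trace_eq_sum']
  rw [Complex.re_sum]
  refine Finset.sum_congr rfl fun p _ => ?_
  rw [← Complex.normSq_eq_conj_mul_self, Complex.sq_norm]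
  simp [Complex.normSq_apply]

lemma trace_re_nonneg {k : Type*} [Fintype k] (Z : Matrix k k ℂ) :
    0 ≤ ((Zᴴ * Z).trace).re := by
  rw [trace_re_eq]
  exact Finset.sum_nonneg fun p _ => sq_nonneg _

lemma cs {k : Type*} [Fintype k] (X Y : Matrix k k ℂ) :
    ‖(Xᴴ * Y).trace‖ ^ 2 ≤ ((Xᴴ * X).trace).re * ((Yᴴ * Y).trace).re := by
  rw [trace_re_eq, trace_re_eq, trace_eq_sum']
  calc ‖∑ p : k × k, (starRingEnd ℂ) (X p.2 p.1) * Y p.2 p.1‖ ^ 2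
      ≤ (∑ p : k × k, ‖X p.2 p.1‖ * ‖Y p.2 p.1‖) ^ 2 := by
        refine pow_le_pow_left₀ (norm_nonneg _) ?_ 2
        refine le_trans (norm_sum_le _ _) (le_of_eq ?_)
        refine Finset.sum_congr rfl fun p _ => ?_
        simp [_root_.map_mul]
    _ ≤ _ := Finset.sum_mul_sq_le_sq_mul_sq _ _ _


/-- `|tr(A*B)|² ≤ tr(|A||B|) · tr(|A*||B*|)`, and consequently
`|tr(A*B)| ≤ (tr(|A||B|) + tr(|A*||B*|))/2`. -/
theorem stmt8 (n : ℕ) (A B : Matrix (Fin n) (Fin n) ℂ) :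
    ‖(Aᴴ * B).trace‖ ^ 2 ≤
      ((mAbs A * mAbs B).trace).re * ((mAbs Aᴴ * mAbs Bᴴ).trace).re ∧
    ‖(Aᴴ * B).trace‖ ≤
      (((mAbs A * mAbs B).trace).re + ((mAbs Aᴴ * mAbs Bᴴ).trace).re) / 2 := by
  have key := fun (A : Matrix (Fin n) (Fin n) ℂ) => aux_key A
  obtain ⟨P, EA, hP, hEA, hPP, hPEA, hEEA⟩ := key A
  obtain ⟨Q, EB, hQ, hEB, hQQ, hPEB, hEEB⟩ := key B
  set X : Matrix (Fin n) (Fin n) ℂ := P * Q with hXdef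
  set Y : Matrix (Fin n) (Fin n) ℂ := EA * Aᴴ * B * EB with hYdef
  have hXs : Xᴴ = Q * P := by rw [hXdef, conjTranspose_mul, hP, hQ]
  have hB2 : B * (EB * Q) = B := by
    have h := congrArg conjTranspose hPEB
    simp only [conjTranspose_mul, conjTranspose_conjTranspose, hQ, hEB,
      Matrix.mul_assoc] at h
    exact h
  have hPEA3 : P * (EA * (Aᴴ * (B * EB))) = Aᴴ * (B * EB) := by
    have h := congrArg (fun Z => Z * (B * EB)) hPEA
    simpa [Matrix.mul_assoc] using h
  have htr : (Xᴴ * Y).trace = (Aᴴ * B).trace := by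
    rw [hXs, hYdef]
    have e1 : Q * P * (EA * Aᴴ * B * EB) = Q * (Aᴴ * (B * EB)) := by
      simp only [Matrix.mul_assoc]
      rw [hPEA3]
    rw [e1, trace_mul_comm]
    have e2 : Aᴴ * (B * EB) * Q = Aᴴ * B := by
      simp only [Matrix.mul_assoc]
      rw [hB2]
    rw [e2]
  have hXX : (Xᴴ * X).trace = (mAbs A * mAbs B).trace := by
    rw [hXs, hXdef]
    have e : Q * P * (P * Q) = Q * (mAbs A * Q) := by
      simp only [Matrix.mul_assoc]
      rw [← Matrix.mul_assoc P P Q, hPP]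
    rw [e, trace_mul_comm, Matrix.mul_assoc, hQQ]
  have hYs : Yᴴ = EB * (Bᴴ * (A * EA)) := by
    rw [hYdef]
    simp only [conjTranspose_mul, conjTranspose_conjTranspose, hEA, hEB, Matrix.mul_assoc]
  have hEEA3 : A * (EA * (EA * (Aᴴ * (B * EB)))) = mAbs Aᴴ * (B * EB) := by
    have h := congrArg (fun Z => Z * (B * EB)) hEEA
    simpa [Matrix.mul_assoc] using h
  have hEEB3 : B * (EB * (EB * Bᴴ)) = mAbs Bᴴ := by
    simpa [Matrix.mul_assoc] using hEEB
  have hYY : (Yᴴ * Y).trace = (mAbs Aᴴ * mAbs Bᴴ).trace := by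
    rw [hYs, hYdef]
    have e1 : EB * (Bᴴ * (A * EA)) * (EA * Aᴴ * B * EB)
        = EB * (Bᴴ * (mAbs Aᴴ * (B * EB))) := by
      simp only [Matrix.mul_assoc]
      rw [hEEA3]
    rw [e1, trace_mul_comm]
    have e2 : Bᴴ * (mAbs Aᴴ * (B * EB)) * EB = Bᴴ * (mAbs Aᴴ * (B * (EB * EB))) := by
      simp only [Matrix.mul_assoc]
    rw [e2, trace_mul_comm]
    have e3 : mAbs Aᴴ * (B * (EB * EB)) * Bᴴ = mAbs Aᴴ * mAbs Bᴴ := by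
      simp only [Matrix.mul_assoc]
      rw [hEEB3]
    rw [e3]
  have part1 : ‖(Aᴴ * B).trace‖ ^ 2 ≤
      ((mAbs A * mAbs B).trace).re * ((mAbs Aᴴ * mAbs Bᴴ).trace).re := by
    rw [← htr, ← hXX, ← hYY]
    exact cs X Y
  refine ⟨part1, ?_⟩
  have hs0 : 0 ≤ ((mAbs A * mAbs B).trace).re := hXX ▸ trace_re_nonneg X
  have ht0 : 0 ≤ ((mAbs Aᴴ * mAbs Bᴴ).trace).re := hYY ▸ trace_re_nonneg Y
  have hx0 : 0 ≤ ‖(Aᴴ * B).trace‖ := norm_nonneg _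
  nlinarith [sq_nonneg (((mAbs A * mAbs B).trace).re - ((mAbs Aᴴ * mAbs Bᴴ).trace).re),
    sq_nonneg (‖(Aᴴ * B).trace‖ +
      (((mAbs A * mAbs B).trace).re + ((mAbs Aᴴ * mAbs Bᴴ).trace).re) / 2)]
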